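/- Let (A, R) be a quasitriangular bialgebra over k and α : A → A an invertible bialgebra homomorphism with (α⊗α)(R) = R. Then R is an R-matrix for the monoidal Hom-bialgebra ᵅA = (A, α, α∘m, η, Δ∘α⁻¹, ε), i.e. ᵅA with R satisfies: (α⊗α)R = R; R·Δ'(h) = Δ'ᵒᵖ(h)·R where Δ' = Δ∘α⁻¹ and products are the twisted product α∘m; and the two hexagon-type identities R⁽¹⁾₁⊗R⁽¹⁾₂⊗R⁽²⁾ = r⁽¹⁾⊗R⁽¹⁾⊗r⁽²⁾R⁽²⁾ and R⁽¹⁾⊗R⁽²⁾₁⊗R⁽²⁾₂ = r⁽¹⁾R⁽¹⁾⊗R⁽²⁾⊗r⁽²⁾ (in the twisted structure). -/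

import Mathlib

open TensorProduct

noncomputable section
namespace HomTwist

variable {k : Type*} [CommRing k]

section Defs
variable {H₁ H₂ A B : Type*} [AddCommGroup H₁] [Module k H₁] [AddCommGroup H₂] [Module k H₂]
  [AddCommGroup A] [Module k A] [AddCommGroup B] [Module k B]

/-- The componentwise "action" of `H₁ ⊗ H₂` on `A ⊗ B` induced by bilinear actions
`f : H₁ → A → A` and `g : H₂ → B → B`:  `(h₁ ⊗ h₂) • (a ⊗ b) = (f h₁ a) ⊗ (g h₂ b)`. -/
def pairMap (f : H₁ →ₗ[k] A →ₗ[k] A) (g : H₂ →ₗ[k] B →ₗ[k] B) :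
    (H₁ ⊗[k] H₂) →ₗ[k] (A ⊗[k] B) →ₗ[k] A ⊗[k] B :=
  TensorProduct.lift (((TensorProduct.mapBilinear (RingHom.id k) A B A B).comp f).compl₂ g)

end Defs

section Structures
variable {H : Type*} [AddCommGroup H] [Module k H]

/-- Componentwise product on `H ⊗ H` induced by a bilinear multiplication on `H`. -/
def mulT (mul : H →ₗ[k] H →ₗ[k] H) : (H ⊗[k] H) →ₗ[k] (H ⊗[k] H) →ₗ[k] H ⊗[k] H :=
  pairMap mul mul

/-- Componentwise product on `H ⊗ (H ⊗ H)`. -/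
def mulT3 (mul : H →ₗ[k] H →ₗ[k] H) :
    (H ⊗[k] (H ⊗[k] H)) →ₗ[k] (H ⊗[k] (H ⊗[k] H)) →ₗ[k] H ⊗[k] (H ⊗[k] H) :=
  pairMap mul (mulT mul)

/-- `(r ⊗ R) ↦ r⁽¹⁾ ⊗ (R⁽¹⁾ ⊗ r⁽²⁾R⁽²⁾)`. -/
def hexA (mul : H →ₗ[k] H →ₗ[k] H) :
    ((H ⊗[k] H) ⊗[k] (H ⊗[k] H)) →ₗ[k] H ⊗[k] (H ⊗[k] H) :=
  (TensorProduct.assoc k H H H).toLinearMap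
    ∘ₗ TensorProduct.map LinearMap.id (TensorProduct.lift mul)
    ∘ₗ (TensorProduct.tensorTensorTensorComm k H H H H).toLinearMap

/-- `(r ⊗ R) ↦ r⁽¹⁾R⁽¹⁾ ⊗ (R⁽²⁾ ⊗ r⁽²⁾)`. -/
def hexB (mul : H →ₗ[k] H →ₗ[k] H) :
    ((H ⊗[k] H) ⊗[k] (H ⊗[k] H)) →ₗ[k] H ⊗[k] (H ⊗[k] H) :=
  TensorProduct.map (TensorProduct.lift mul) (TensorProduct.comm k H H).toLinearMap
    ∘ₗ (TensorProduct.tensorTensorTensorComm k H H H H).toLinearMap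

/-- Axioms of a monoidal Hom-bialgebra (Caenepeel–Goyvaerts). -/
structure IsMonHomBialgebra (mul : H →ₗ[k] H →ₗ[k] H) (one : H) (alpha : H ≃ₗ[k] H)
    (comul : H →ₗ[k] H ⊗[k] H) (counit : H →ₗ[k] k) : Prop where
  alpha_mul : ∀ a b, alpha (mul a b) = mul (alpha a) (alpha b)
  hom_assoc : ∀ a b c, mul (alpha a) (mul b c) = mul (mul a b) (alpha c)
  alpha_one : alpha one = one
  one_mul' : ∀ a, mul one a = alpha a
  mul_one' : ∀ a, mul a one = alpha a
  comul_alpha : ∀ c, comul (alpha c)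
      = TensorProduct.map alpha.toLinearMap alpha.toLinearMap (comul c)
  hom_coassoc : ∀ c,
      TensorProduct.map alpha.symm.toLinearMap comul (comul c)
        = TensorProduct.assoc k H H H
            (TensorProduct.map comul alpha.symm.toLinearMap (comul c))
  counit_alpha : ∀ c, counit (alpha c) = counit c
  counit_id : ∀ c, TensorProduct.lid k H
      (TensorProduct.map counit LinearMap.id (comul c)) = alpha.symm c
  id_counit : ∀ c, TensorProduct.rid k H
      (TensorProduct.map LinearMap.id counit (comul c)) = alpha.symm c
  comul_mul : ∀ a b, comul (mul a b) = mulT mul (comul a) (comul b)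
  comul_one : comul one = one ⊗ₜ[k] one
  counit_mul : ∀ a b, counit (mul a b) = counit a * counit b
  counit_one : counit one = 1

/-- Axioms of a (Makhlouf–Silvestrov) Hom-bialgebra (with bijective structure map). -/
structure IsHomBialgebra (mul : H →ₗ[k] H →ₗ[k] H) (one : H) (alpha : H ≃ₗ[k] H)
    (comul : H →ₗ[k] H ⊗[k] H) (counit : H →ₗ[k] k) : Prop where
  alpha_mul : ∀ a b, alpha (mul a b) = mul (alpha a) (alpha b)
  hom_assoc : ∀ a b c, mul (alpha a) (mul b c) = mul (mul a b) (alpha c)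
  alpha_one : alpha one = one
  one_mul' : ∀ a, mul one a = alpha a
  mul_one' : ∀ a, mul a one = alpha a
  comul_alpha : ∀ c, comul (alpha c)
      = TensorProduct.map alpha.toLinearMap alpha.toLinearMap (comul c)
  hom_coassoc : ∀ c,
      TensorProduct.map alpha.toLinearMap comul (comul c)
        = TensorProduct.assoc k H H H
            (TensorProduct.map comul alpha.toLinearMap (comul c))
  counit_alpha : ∀ c, counit (alpha c) = counit c
  counit_id : ∀ c, TensorProduct.lid k H
      (TensorProduct.map counit LinearMap.id (comul c)) = alpha c
  id_counit : ∀ c, TensorProduct.rid k H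
      (TensorProduct.map LinearMap.id counit (comul c)) = alpha c
  comul_mul : ∀ a b, comul (mul a b) = mulT mul (comul a) (comul b)
  comul_one : comul one = one ⊗ₜ[k] one
  counit_mul : ∀ a b, counit (mul a b) = counit a * counit b
  counit_one : counit one = 1

/-- Axioms of an ordinary (possibly noncommutative) bialgebra, given by raw data. -/
structure IsBialgebra (mul : H →ₗ[k] H →ₗ[k] H) (one : H)
    (comul : H →ₗ[k] H ⊗[k] H) (counit : H →ₗ[k] k) : Prop where
  assoc : ∀ a b c, mul (mul a b) c = mul a (mul b c)
  one_mul' : ∀ a, mul one a = a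
  mul_one' : ∀ a, mul a one = a
  coassoc : ∀ c, TensorProduct.map LinearMap.id comul (comul c)
      = TensorProduct.assoc k H H H (TensorProduct.map comul LinearMap.id (comul c))
  counit_id : ∀ c, TensorProduct.lid k H
      (TensorProduct.map counit LinearMap.id (comul c)) = c
  id_counit : ∀ c, TensorProduct.rid k H
      (TensorProduct.map LinearMap.id counit (comul c)) = c
  comul_mul : ∀ a b, comul (mul a b) = mulT mul (comul a) (comul b)
  comul_one : comul one = one ⊗ₜ[k] one
  counit_mul : ∀ a b, counit (mul a b) = counit a * counit b
  counit_one : counit one = 1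

/-- A Drinfeld twist `σ` (with inverse `ϱ`) for a monoidal Hom-bialgebra. -/
structure IsTwist (mul : H →ₗ[k] H →ₗ[k] H) (one : H) (alpha : H ≃ₗ[k] H)
    (comul : H →ₗ[k] H ⊗[k] H) (counit : H →ₗ[k] k) (σ ϱ : H ⊗[k] H) : Prop where
  mul_inv : mulT mul σ ϱ = one ⊗ₜ[k] one
  inv_mul : mulT mul ϱ σ = one ⊗ₜ[k] one
  T1 : TensorProduct.map alpha.toLinearMap alpha.toLinearMap σ = σ
  T2l : TensorProduct.lid k H (TensorProduct.map counit LinearMap.id σ) = one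
  T2r : TensorProduct.rid k H (TensorProduct.map LinearMap.id counit σ) = one
  T3 : TensorProduct.map LinearMap.id (mulT mul σ)
        (TensorProduct.map LinearMap.id comul σ)
      = TensorProduct.assoc k H H H
          (TensorProduct.map (mulT mul σ) LinearMap.id
            (TensorProduct.map comul LinearMap.id σ))

/-- The `R`-matrix axioms (Q1)–(Q4) for a monoidal Hom-bialgebra. -/
structure IsRMatrix (mul : H →ₗ[k] H →ₗ[k] H) (alpha : H ≃ₗ[k] H)
    (comul : H →ₗ[k] H ⊗[k] H) (R : H ⊗[k] H) : Prop where
  Q1 : TensorProduct.map alpha.toLinearMap alpha.toLinearMap R = R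
  Q2 : ∀ h, mulT mul R (comul h)
      = mulT mul (TensorProduct.comm k H H (comul h)) R
  Q3 : TensorProduct.assoc k H H H (TensorProduct.map comul LinearMap.id R)
      = hexA mul (R ⊗ₜ[k] R)
  Q4 : TensorProduct.map LinearMap.id comul R = hexB mul (R ⊗ₜ[k] R)

/-- Axioms of a monoidal Hom-algebra. -/
structure IsMonHomAlgebra {A : Type*} [AddCommGroup A] [Module k A]
    (mul : A →ₗ[k] A →ₗ[k] A) (one : A) (alpha : A ≃ₗ[k] A) : Prop where
  alpha_mul : ∀ a b, alpha (mul a b) = mul (alpha a) (alpha b)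
  hom_assoc : ∀ a b c, mul (alpha a) (mul b c) = mul (mul a b) (alpha c)
  alpha_one : alpha one = one
  one_mul' : ∀ a, mul one a = alpha a
  mul_one' : ∀ a, mul a one = alpha a

/-- Axioms of a monoidal Hom-coalgebra. -/
structure IsMonHomCoalgebra {C : Type*} [AddCommGroup C] [Module k C]
    (comul : C →ₗ[k] C ⊗[k] C) (counit : C →ₗ[k] k) (alpha : C ≃ₗ[k] C) : Prop where
  comul_alpha : ∀ c, comul (alpha c)
      = TensorProduct.map alpha.toLinearMap alpha.toLinearMap (comul c)
  hom_coassoc : ∀ c,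
      TensorProduct.map alpha.symm.toLinearMap comul (comul c)
        = TensorProduct.assoc k C C C
            (TensorProduct.map comul alpha.symm.toLinearMap (comul c))
  counit_alpha : ∀ c, counit (alpha c) = counit c
  counit_id : ∀ c, TensorProduct.lid k C
      (TensorProduct.map counit LinearMap.id (comul c)) = alpha.symm c
  id_counit : ∀ c, TensorProduct.rid k C
      (TensorProduct.map LinearMap.id counit (comul c)) = alpha.symm c

/-- Axioms of a left `H`-Hom-module. -/
structure IsHomModule {M : Type*} [AddCommGroup M] [Module k M]
    (mul : H →ₗ[k] H →ₗ[k] H) (one : H) (alpha : H ≃ₗ[k] H)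
    (alM : M ≃ₗ[k] M) (act : H →ₗ[k] M →ₗ[k] M) : Prop where
  compat : ∀ h m, alM (act h m) = act (alpha h) (alM m)
  hom_smul : ∀ h h' m, act (alpha h) (act h' m) = act (mul h h') (alM m)
  one_smul' : ∀ m, act one m = alM m

/-- The twisted coproduct `Δᵠ(x) = (σ Δ(x)) ϱ`. -/
def twistComul (mul : H →ₗ[k] H →ₗ[k] H) (comul : H →ₗ[k] H ⊗[k] H)
    (σ ϱ : H ⊗[k] H) : H →ₗ[k] H ⊗[k] H :=
  ((mulT mul).flip ϱ) ∘ₗ (mulT mul σ) ∘ₗ comul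

end Structures
end HomTwist
end

namespace HomTwist
open TensorProduct

section AuxLemmas
variable {k : Type*} [CommRing k] {H : Type*} [AddCommGroup H] [Module k H]

lemma pairMap_tmul {H₁ H₂ A B : Type*} [AddCommGroup H₁] [Module k H₁]
    [AddCommGroup H₂] [Module k H₂] [AddCommGroup A] [Module k A]
    [AddCommGroup B] [Module k B]
    (f : H₁ →ₗ[k] A →ₗ[k] A) (g : H₂ →ₗ[k] B →ₗ[k] B)
    (h₁ : H₁) (h₂ : H₂) (a : A) (b : B) :
    pairMap f g (h₁ ⊗ₜ[k] h₂) (a ⊗ₜ[k] b) = f h₁ a ⊗ₜ[k] g h₂ b := by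
  simp [pairMap]

lemma mulT_tmul (mul : H →ₗ[k] H →ₗ[k] H) (a b c d : H) :
    mulT mul (a ⊗ₜ[k] b) (c ⊗ₜ[k] d) = mul a c ⊗ₜ[k] mul b d := by
  simp [mulT, pairMap_tmul]

lemma mulT_compr₂ (mul : H →ₗ[k] H →ₗ[k] H) (φ : H →ₗ[k] H) (x y : H ⊗[k] H) :
    mulT (mul.compr₂ φ) x y = TensorProduct.map φ φ (mulT mul x y) := by
  induction x using TensorProduct.induction_on with
  | zero => simp
  | tmul a b =>
    induction y using TensorProduct.induction_on with
    | zero => simp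
    | tmul c d => simp [mulT_tmul]
    | add u v hu hv => simp only [map_add, hu, hv]
  | add u v hu hv => simp only [map_add, LinearMap.add_apply, hu, hv]

lemma hexA_tmul (mul : H →ₗ[k] H →ₗ[k] H) (a b c d : H) :
    hexA mul ((a ⊗ₜ[k] b) ⊗ₜ[k] (c ⊗ₜ[k] d)) = a ⊗ₜ[k] (c ⊗ₜ[k] mul b d) := by
  simp [hexA]

lemma hexB_tmul (mul : H →ₗ[k] H →ₗ[k] H) (a b c d : H) :
    hexB mul ((a ⊗ₜ[k] b) ⊗ₜ[k] (c ⊗ₜ[k] d)) = mul a c ⊗ₜ[k] (d ⊗ₜ[k] b) := by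
  simp [hexB]

lemma hexA_compr₂ (mul : H →ₗ[k] H →ₗ[k] H) (φ : H →ₗ[k] H) (r s : H ⊗[k] H) :
    hexA (mul.compr₂ φ) (r ⊗ₜ[k] s)
      = TensorProduct.map LinearMap.id (TensorProduct.map LinearMap.id φ)
          (hexA mul (r ⊗ₜ[k] s)) := by
  induction r using TensorProduct.induction_on with
  | zero => simp
  | tmul a b =>
    induction s using TensorProduct.induction_on with
    | zero => simp
    | tmul c d => simp [hexA_tmul]
    | add u v hu hv => simp only [tmul_add, map_add, hu, hv]
  | add u v hu hv => simp only [add_tmul, map_add, hu, hv]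

lemma hexB_compr₂ (mul : H →ₗ[k] H →ₗ[k] H) (φ : H →ₗ[k] H) (r s : H ⊗[k] H) :
    hexB (mul.compr₂ φ) (r ⊗ₜ[k] s)
      = TensorProduct.map φ LinearMap.id (hexB mul (r ⊗ₜ[k] s)) := by
  induction r using TensorProduct.induction_on with
  | zero => simp
  | tmul a b =>
    induction s using TensorProduct.induction_on with
    | zero => simp
    | tmul c d => simp [hexB_tmul]
    | add u v hu hv => simp only [tmul_add, map_add, hu, hv]
  | add u v hu hv => simp only [add_tmul, map_add, hu, hv]

lemma assoc_map_right (g : H →ₗ[k] H) :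
    (TensorProduct.assoc k H H H).toLinearMap
        ∘ₗ TensorProduct.map (LinearMap.id (M := H ⊗[k] H)) g
      = TensorProduct.map LinearMap.id (TensorProduct.map LinearMap.id g)
          ∘ₗ (TensorProduct.assoc k H H H).toLinearMap := by
  apply TensorProduct.ext_threefold
  intro x y z
  simp

variable {A : Type*} [Ring A] [Algebra k A]

lemma R13_R23 (r s : A ⊗[k] A) :
    mulT3 (LinearMap.mul k A)
      (TensorProduct.map LinearMap.id (TensorProduct.comm k A A).toLinearMap
        (TensorProduct.assoc k A A A (r ⊗ₜ[k] (1 : A)))) ((1 : A) ⊗ₜ[k] s)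
    = hexA (LinearMap.mul k A) (r ⊗ₜ[k] s) := by
  induction r using TensorProduct.induction_on with
  | zero =>
    simp only [zero_tmul, LinearMap.map_zero, LinearEquiv.map_zero, LinearMap.zero_apply]
  | tmul a b =>
    induction s using TensorProduct.induction_on with
    | zero => simp
    | tmul c d =>
      simp [mulT3, pairMap_tmul, mulT_tmul, hexA_tmul]
    | add u v hu hv => simp only [tmul_add, map_add, hu, hv]
  | add u v hu hv => simp only [add_tmul, map_add, LinearMap.add_apply, hu, hv]

lemma R13_R12 (r s : A ⊗[k] A) :
    mulT3 (LinearMap.mul k A)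
      (TensorProduct.map LinearMap.id (TensorProduct.comm k A A).toLinearMap
        (TensorProduct.assoc k A A A (r ⊗ₜ[k] (1 : A))))
      (TensorProduct.assoc k A A A (s ⊗ₜ[k] (1 : A)))
    = hexB (LinearMap.mul k A) (r ⊗ₜ[k] s) := by
  induction r using TensorProduct.induction_on with
  | zero =>
    simp only [zero_tmul, LinearMap.map_zero, LinearEquiv.map_zero, LinearMap.zero_apply]
  | tmul a b =>
    induction s using TensorProduct.induction_on with
    | zero =>
      simp only [zero_tmul, LinearMap.map_zero, LinearEquiv.map_zero, tmul_zero]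
    | tmul c d =>
      simp [mulT3, pairMap_tmul, mulT_tmul, hexB_tmul]
    | add u v hu hv => simp only [tmul_add, add_tmul, map_add, hu, hv]
  | add u v hu hv => simp only [add_tmul, map_add, LinearMap.add_apply, hu, hv]

end AuxLemmas

/-- A quasitriangular bialgebra `(A, R)` with an invertible bialgebra
homomorphism `α` fixing `R` yields the quasitriangular monoidal Hom-bialgebra
`(ᵅA, α, R)`: `R` is an (invertible) `R`-matrix for the twisted structure. -/
theorem quasitriangular_transfers_to_hom
    {k A : Type*} [CommRing k] [Ring A] [Bialgebra k A]
    (α : A ≃ₐ[k] A)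
    (hcomul : ∀ a : A, Coalgebra.comul (R := k) (α a)
      = TensorProduct.map α.toLinearMap α.toLinearMap (Coalgebra.comul (R := k) a))
    (hcounit : ∀ a : A, Coalgebra.counit (R := k) (α a) = Coalgebra.counit (R := k) a)
    (R Rinv : A ⊗[k] A)
    -- `R` is invertible:
    (hinv₁ : mulT (LinearMap.mul k A) R Rinv = (1 : A) ⊗ₜ[k] (1 : A))
    (hinv₂ : mulT (LinearMap.mul k A) Rinv R = (1 : A) ⊗ₜ[k] (1 : A))
    -- `R Δ(x) = Δᵒᵖ(x) R`:
    (hQT₁ : ∀ x : A, mulT (LinearMap.mul k A) R (Coalgebra.comul (R := k) x)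
      = mulT (LinearMap.mul k A)
          (TensorProduct.comm k A A (Coalgebra.comul (R := k) x)) R)
    -- `(Δ ⊗ id)(R) = R₁₃ R₂₃`:
    (hQT₂ : TensorProduct.assoc k A A A
        (TensorProduct.map (Coalgebra.comul (R := k)) LinearMap.id R)
      = mulT3 (LinearMap.mul k A)
          (TensorProduct.map LinearMap.id (TensorProduct.comm k A A).toLinearMap
            (TensorProduct.assoc k A A A (R ⊗ₜ[k] (1 : A))))
          ((1 : A) ⊗ₜ[k] R))
    -- `(id ⊗ Δ)(R) = R₁₃ R₁₂`:
    (hQT₃ : TensorProduct.map LinearMap.id (Coalgebra.comul (R := k)) R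
      = mulT3 (LinearMap.mul k A)
          (TensorProduct.map LinearMap.id (TensorProduct.comm k A A).toLinearMap
            (TensorProduct.assoc k A A A (R ⊗ₜ[k] (1 : A))))
          (TensorProduct.assoc k A A A (R ⊗ₜ[k] (1 : A))))
    -- `(α ⊗ α)(R) = R`:
    (hαR : TensorProduct.map α.toLinearMap α.toLinearMap R = R) :
    IsRMatrix ((LinearMap.mul k A).compr₂ α.toLinearMap) α.toLinearEquiv
        ((Coalgebra.comul (R := k) (A := A)) ∘ₗ (α.symm : A ≃ₐ[k] A).toLinearMap) R
      ∧ mulT ((LinearMap.mul k A).compr₂ α.toLinearMap) R Rinv = (1 : A) ⊗ₜ[k] (1 : A)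
      ∧ mulT ((LinearMap.mul k A).compr₂ α.toLinearMap) Rinv R = (1 : A) ⊗ₜ[k] (1 : A) := by
  have hsa : (α.symm : A ≃ₐ[k] A).toLinearMap ∘ₗ α.toLinearMap = LinearMap.id := by
    ext x; simp
  -- rewriting `R` through `α ⊗ α` on the left component of `map`:
  have key₂ : TensorProduct.map
      ((Coalgebra.comul (R := k) (A := A)) ∘ₗ (α.symm : A ≃ₐ[k] A).toLinearMap)
      LinearMap.id R
      = TensorProduct.map (Coalgebra.comul (R := k)) α.toLinearMap R := by
    conv_lhs => rw [← hαR, ← LinearMap.comp_apply, ← TensorProduct.map_comp,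
      LinearMap.comp_assoc, hsa, LinearMap.comp_id, LinearMap.id_comp]
  have key₃ : TensorProduct.map LinearMap.id
      ((Coalgebra.comul (R := k) (A := A)) ∘ₗ (α.symm : A ≃ₐ[k] A).toLinearMap) R
      = TensorProduct.map α.toLinearMap (Coalgebra.comul (R := k)) R := by
    conv_lhs => rw [← hαR, ← LinearMap.comp_apply, ← TensorProduct.map_comp,
      LinearMap.comp_assoc, hsa, LinearMap.comp_id, LinearMap.id_comp]
  refine ⟨⟨hαR, ?_, ?_, ?_⟩, ?_, ?_⟩
  · -- (Q2)
    intro h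
    simp only [LinearMap.comp_apply]
    rw [mulT_compr₂, mulT_compr₂, hQT₁]
  · -- (Q3)
    rw [key₂]
    have split : TensorProduct.map (Coalgebra.comul (R := k) (A := A)) α.toLinearMap
        = TensorProduct.map LinearMap.id α.toLinearMap
            ∘ₗ TensorProduct.map (Coalgebra.comul (R := k)) LinearMap.id := by
      rw [← TensorProduct.map_comp, LinearMap.id_comp, LinearMap.comp_id]
    rw [split, LinearMap.comp_apply]
    have h := LinearMap.congr_fun (assoc_map_right (k := k) (H := A) α.toLinearMap)
      (TensorProduct.map (Coalgebra.comul (R := k)) LinearMap.id R)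
    simp only [LinearMap.comp_apply, LinearEquiv.coe_coe] at h
    rw [h, hQT₂, R13_R23, ← hexA_compr₂]
  · -- (Q4)
    rw [key₃]
    have split : TensorProduct.map α.toLinearMap (Coalgebra.comul (R := k) (A := A))
        = TensorProduct.map α.toLinearMap LinearMap.id
            ∘ₗ TensorProduct.map LinearMap.id (Coalgebra.comul (R := k)) := by
      rw [← TensorProduct.map_comp, LinearMap.id_comp, LinearMap.comp_id]
    rw [split, LinearMap.comp_apply, hQT₃, R13_R12, ← hexB_compr₂]
  · rw [mulT_compr₂, hinv₁]; simp
  · rw [mulT_compr₂, hinv₂]; simp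

end HomTwist
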